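/- Let φ : (0,∞) × (0,∞) → [0,∞) be a measurable function such that for every t > 0 the map s ↦ φ(t,s) is monotone increasing on (0,t]. Assume that for every t > 0, lim_{α → ∞} α ∫₀^t e^{−α s} φ(t,s) ds = 0. Then for (Lebesgue) almost every t > 0 one has lim_{δ → 0⁺} φ(t,δ) = 0. -/

import Mathlib

open MeasureTheory Filter

lemma exp_int_aux (α t : ℝ) (hα : 0 < α) (ht : 0 ≤ t) :
    ∫ s in Set.Ioc (0:ℝ) t, Real.exp (-α * s) = (1 - Real.exp (-α * t)) / α := by
  · rw [← intervalIntegral.integral_of_le ht]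
    have : ∀ s ∈ Set.uIcc (0:ℝ) t, HasDerivAt (fun x => -Real.exp (-α * x) / α)
        (Real.exp (-α * s)) s := by
      intro s _
      have h1 : HasDerivAt (fun x : ℝ => -α * x) (-α) s := by
        simpa using (hasDerivAt_id s).const_mul (-α)
      have h2 := (Real.hasDerivAt_exp (-α * s)).comp s h1
      have h3 := ((h2.neg).div_const α)
      have h4 : -(Real.exp (-α * s) * -α) / α = Real.exp (-α * s) := by
        rw [div_eq_iff hα.ne']
        ring
      rw [h4] at h3
      exact h3
    rw [intervalIntegral.integral_eq_sub_of_hasDerivAt this]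
    · field_simp
      rw [mul_zero, neg_zero, Real.exp_zero]
      ring
    · apply Continuous.intervalIntegrable
      continuity

/-- (a)(i) of the Laplace-transform lemma. If `φ(t,·)` is nonnegative and
increasing on `(0,t]` for every `t > 0`, and for every `t > 0` we have
`α ∫₀^t e^{-αs} φ(t,s) ds → 0` as `α → ∞`, then `φ(t,0⁺) = 0` for a.e. `t > 0`. -/
theorem stmt0 (φ : ℝ → ℝ → ℝ)
    (hmeas : Measurable (Function.uncurry φ))
    (hnonneg : ∀ t s : ℝ, 0 < t → 0 < s → 0 ≤ φ t s)
    (hmono : ∀ t : ℝ, 0 < t → ∀ s u : ℝ, 0 < s → s ≤ u → u ≤ t → φ t s ≤ φ t u)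
    (hlim : ∀ t : ℝ, 0 < t →
      Tendsto (fun α : ℝ => α * ∫ s in Set.Ioc (0:ℝ) t, Real.exp (-α * s) * φ t s)
        atTop (nhds 0)) :
    ∀ᵐ t ∂(volume.restrict (Set.Ioi (0:ℝ))),
      Tendsto (fun s => φ t s) (nhdsWithin 0 (Set.Ioi 0)) (nhds 0) := by
  filter_upwards [ae_restrict_mem measurableSet_Ioi] with t ht
  simp only [Set.mem_Ioi] at ht
  -- key claim
  have key : ∀ ε : ℝ, 0 < ε → ∃ s, 0 < s ∧ s ≤ t ∧ φ t s < ε := by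
    intro ε hε
    by_contra h
    push_neg at h
    have hlow : ∀ s, 0 < s → s ≤ t → ε ≤ φ t s := h
    -- measurability of slice
    have hslice : Measurable (fun s => φ t s) :=
      hmeas.comp (measurable_const.prodMk measurable_id)
    -- lower bound eventually
    have hev : ∀ᶠ α in atTop, ε * (1 - Real.exp (-α * t)) ≤
        α * ∫ s in Set.Ioc (0:ℝ) t, Real.exp (-α * s) * φ t s := by
      filter_upwards [eventually_gt_atTop 0] with α hα
      have hint1 : IntegrableOn (fun s => Real.exp (-α * s) * ε) (Set.Ioc 0 t) := by
        apply Continuous.integrableOn_Ioc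
        continuity
      have hint2 : IntegrableOn (fun s => Real.exp (-α * s) * φ t s) (Set.Ioc 0 t) := by
        apply Integrable.mono' (integrable_const (φ t t))
        · exact ((Real.measurable_exp.comp (measurable_id.const_mul (-α))).mul
            hslice).aestronglyMeasurable
        · filter_upwards [ae_restrict_mem measurableSet_Ioc] with s hs
          have hs1 : 0 < s := hs.1
          have hs2 : s ≤ t := hs.2
          have hexp : Real.exp (-α * s) ≤ 1 := by
            apply Real.exp_le_one_iff.mpr
            nlinarith
          have hφ1 : 0 ≤ φ t s := hnonneg t s ht hs1
          have hφ2 : φ t s ≤ φ t t := hmono t ht s t hs1 hs2 le_rfl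
          rw [Real.norm_eq_abs, abs_of_nonneg (by positivity)]
          nlinarith [Real.exp_pos (-α * s)]
      have hmono' : ∫ s in Set.Ioc (0:ℝ) t, Real.exp (-α * s) * ε ≤
          ∫ s in Set.Ioc (0:ℝ) t, Real.exp (-α * s) * φ t s := by
        apply setIntegral_mono_on hint1 hint2 measurableSet_Ioc
        intro s hs
        exact mul_le_mul_of_nonneg_left (hlow s hs.1 hs.2) (Real.exp_pos _).le
      have heq : ∫ s in Set.Ioc (0:ℝ) t, Real.exp (-α * s) * ε =
          ε * ((1 - Real.exp (-α * t)) / α) := by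
        rw [MeasureTheory.integral_mul_const, exp_int_aux α t hα ht.le, mul_comm]
      calc ε * (1 - Real.exp (-α * t))
          = α * (ε * ((1 - Real.exp (-α * t)) / α)) := by field_simp
        _ = α * ∫ s in Set.Ioc (0:ℝ) t, Real.exp (-α * s) * ε := by rw [heq]
        _ ≤ α * ∫ s in Set.Ioc (0:ℝ) t, Real.exp (-α * s) * φ t s :=
            mul_le_mul_of_nonneg_left hmono' hα.le
    -- the lower bound tends to ε
    have htend : Tendsto (fun α : ℝ => ε * (1 - Real.exp (-α * t))) atTop (nhds ε) := by
      have h1 : Tendsto (fun α : ℝ => -α * t) atTop atBot := by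
        apply Tendsto.atBot_mul_const ht
        exact tendsto_neg_atTop_atBot
      have h2 := Real.tendsto_exp_atBot.comp h1
      have := ((tendsto_const_nhds (x := (1:ℝ))).sub h2).const_mul ε
      simpa using this
    have := le_of_tendsto_of_tendsto htend (hlim t ht) hev
    linarith
  -- conclude tendsto
  rw [Metric.tendsto_nhdsWithin_nhds]
  intro ε hε
  obtain ⟨s, hs0, hst, hsφ⟩ := key ε hε
  refine ⟨s, hs0, fun x hx hdx => ?_⟩
  simp only [Set.mem_Ioi] at hx
  rw [Real.dist_eq, sub_zero] at hdx ⊢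
  rw [abs_of_nonneg (hnonneg t x ht hx)]
  have : x ≤ s := le_of_lt (by rwa [abs_of_nonneg hx.le] at hdx)
  exact lt_of_le_of_lt (hmono t ht x s hx this hst) hsφ
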